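/- arXiv:1807.06149 — 2 statements merged into one kernel-verified Lean document; each statement's English description precedes it below -/
import Mathlib

section
/- Let Φ be a finite set of propositional variables, let A ⊊ Φ be a proper subset, and let 𝔙 ⊆ 2^Φ be an arbitrary set of variable assignments. Then A belongs to 𝔙̂, the closure of 𝔙 under intersections of nonempty subfamilies, if and only if there is no element a ∈ Φ \ A such that 𝔙 ⊨ A → {a}; equivalently, A ∈ 𝔙̂ if and only if for every a ∈ Φ \ A there exists B ∈ 𝔙 with A ⊆ B and a ∉ B. -/
/-- `V ⊨ A → B`: a variable assignment `V` (identified with the set of variables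
assigned true) is a model of the implication `A → B`. -/
def IsModelOfImp {Φ : Type*} (V A B : Set Φ) : Prop :=
  ¬ A ⊆ V ∨ B ⊆ V

/-- `𝔙 ⊨ A → B`: every assignment in `𝔙` is a model of `A → B`. -/
def FamModels {Φ : Type*} (𝔙 : Set (Set Φ)) (A B : Set Φ) : Prop :=
  ∀ V ∈ 𝔙, IsModelOfImp V A B

/-- `𝔙̂`: the closure of `𝔙` under intersections of nonempty subfamilies. -/
def interClosure {Φ : Type*} (𝔙 : Set (Set Φ)) : Set (Set Φ) :=
  {X | ∃ S ⊆ 𝔙, S.Nonempty ∧ X = ⋂₀ S}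

theorem stmt_0 {Φ : Type*} [Fintype Φ] (A : Set Φ) (hA : A ⊂ Set.univ)
    (𝔙 : Set (Set Φ)) :
    (A ∈ interClosure 𝔙 ↔ ¬ ∃ a ∈ Set.univ \ A, FamModels 𝔙 A {a}) ∧
    (A ∈ interClosure 𝔙 ↔ ∀ a ∈ Set.univ \ A, ∃ B ∈ 𝔙, A ⊆ B ∧ a ∉ B) := by
  have key : A ∈ interClosure 𝔙 ↔ ∀ a ∈ Set.univ \ A, ∃ B ∈ 𝔙, A ⊆ B ∧ a ∉ B := by
    constructor
    · rintro ⟨S, hS𝔙, hSne, rfl⟩ a ⟨-, ha⟩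
      simp only [Set.mem_sInter, not_forall] at ha
      obtain ⟨B, hBS, haB⟩ := ha
      exact ⟨B, hS𝔙 hBS, fun x hx => hx B hBS, haB⟩
    · intro h
      obtain ⟨a, -, haA⟩ := Set.exists_of_ssubset hA
      obtain ⟨B₀, hB₀, hAB₀, -⟩ := h a ⟨trivial, haA⟩
      refine ⟨{B ∈ 𝔙 | A ⊆ B}, fun B hB => hB.1, ⟨B₀, hB₀, hAB₀⟩, ?_⟩
      apply Set.Subset.antisymm
      · exact fun x hx => Set.mem_sInter.mpr fun B hB => hB.2 hx
      · intro x hx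
        by_contra hxA
        obtain ⟨B, hB, hAB, hxB⟩ := h x ⟨trivial, hxA⟩
        exact hxB (hx B ⟨hB, hAB⟩)
  refine ⟨key.trans ?_, key⟩
  constructor
  · intro h ⟨a, ha, hmod⟩
    obtain ⟨B, hB, hAB, haB⟩ := h a ha
    rcases hmod B hB with h' | h'
    · exact h' hAB
    · exact haB (h' rfl)
  · intro h a ha
    by_contra hc
    push_neg at hc
    exact h ⟨a, ha, fun V hV => by
      by_cases hAV : A ⊆ V
      · exact Or.inr (Set.singleton_subset_iff.mpr (by
          by_contra haV; exact haV (by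
            have := hc V hV hAV
            simpa using this)))
      · exact Or.inl hAV⟩
end

section
/- Let Φ be a finite set of propositional variables and let ℱ ⊆ 2^Φ be any family of subsets of Φ closed under intersections of nonempty subfamilies. Then there exists a finite set ℋ of implications, i.e., pairs (A, B) with A ⊆ Φ and B ⊆ Φ ∪ {⊥} for a symbol ⊥ ∉ Φ, such that ℱ is exactly the set of common models of ℋ, where V ⊆ Φ is a model of (A, B) if A ⊄ V or B ⊆ V (and B ⊆ V is impossible when ⊥ ∈ B). -/
/-- An implication over `Φ`: a pair `(A, B)` with `A ⊆ Φ` and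
`B ⊆ Φ ∪ {⊥}`, where the falsum `⊥ ∉ Φ` is encoded as `Option.none`
(so `Φ ∪ {⊥}` is encoded as `Option Φ`). -/
abbrev Implication (Φ : Type*) := Set Φ × Set (Option Φ)

/-- `V ⊆ Φ` is a model of the implication `(A, B)` if `A ⊄ V` or `B ⊆ V`
(where `V` is viewed inside `Φ ∪ {⊥}` via `some`, so `B ⊆ V` is impossible
when `⊥ ∈ B`). -/
def IsModel {Φ : Type*} (V : Set Φ) (imp : Implication Φ) : Prop :=
  ¬ imp.1 ⊆ V ∨ imp.2 ⊆ Option.some '' V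

/-- `Mod ℋ`: the set of common models of all implications in `ℋ`. -/
def Models {Φ : Type*} (ℋ : Set (Implication Φ)) : Set (Set Φ) :=
  {V | ∀ imp ∈ ℋ, IsModel V imp}

theorem stmt_7 {Φ : Type*} [Fintype Φ] (ℱ : Set (Set Φ))
    (hℱ : ∀ S ⊆ ℱ, S.Nonempty → ⋂₀ S ∈ ℱ) :
    ∃ ℋ : Set (Implication Φ), ℋ.Finite ∧ ℱ = Models ℋ := by
  classical
  set cl : Set Φ → Set Φ := fun V => ⋂₀ {W | W ∈ ℱ ∧ V ⊆ W} with hcl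
  let f : Set Φ → Implication Φ := fun V =>
    if ∃ W ∈ ℱ, V ⊆ W then (V, Option.some '' cl V) else (V, {Option.none})
  refine ⟨f '' ℱᶜ, Set.toFinite _, ?_⟩
  ext U
  constructor
  · intro hU imp himp
    obtain ⟨V, hV, rfl⟩ := himp
    by_cases h : ∃ W ∈ ℱ, V ⊆ W
    · simp only [f, if_pos h, IsModel]
      by_cases hVU : V ⊆ U
      · exact Or.inr (Set.image_mono (Set.sInter_subset_of_mem ⟨hU, hVU⟩))
      · exact Or.inl hVU
    · simp only [f, if_neg h, IsModel]
      exact Or.inl fun hVU => h ⟨U, hU, hVU⟩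
  · intro hU
    by_contra hUF
    have hm := hU (f U) ⟨U, hUF, rfl⟩
    by_cases h : ∃ W ∈ ℱ, U ⊆ W
    · obtain ⟨W, hW, hUW⟩ := h
      have hcl' : cl U ∈ ℱ := hℱ _ (fun X hX => hX.1) ⟨W, hW, hUW⟩
      simp only [f, if_pos (⟨W, hW, hUW⟩ : ∃ W ∈ ℱ, U ⊆ W), IsModel] at hm
      rcases hm with h1 | h2
      · exact h1 (subset_refl U)
      · have hsub : cl U ⊆ U :=
          (Set.image_subset_image_iff (Option.some_injective Φ)).mp h2
        have hsup : U ⊆ cl U := Set.subset_sInter (fun X hX => hX.2)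
        exact hUF ((hsub.antisymm hsup) ▸ hcl')
    · simp only [f, if_neg h, IsModel] at hm
      rcases hm with h1 | h2
      · exact h1 (subset_refl U)
      · have : Option.none ∈ Option.some '' U := h2 rfl
        simp at this
end
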